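/- For any subset K of H(M_A,M_B), the following identities hold: K^⊳ = {φ ∈ H(M_A,M_B) : ψ*∘φ is completely positive for every ψ ∈ K}, and K^⊲ = {φ ∈ H(M_A,M_B) : φ∘ψ* is completely positive for every ψ ∈ K}. -/

import Mathlib

open Matrix Finset
open scoped ComplexOrder Kronecker

/-- The algebra of `n × n` complex matrices. -/
abbrev Mat (n : ℕ) := Matrix (Fin n) (Fin n) ℂ

/-- Linear maps between matrix algebras. -/
abbrev MMap (m n : ℕ) := Mat m →ₗ[ℂ] Mat n

/-- The bilinear pairing `⟨a,b⟩ = Tr(aᵀ b)`. -/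
noncomputable def mpair {ι : Type*} [Fintype ι] (x y : Matrix ι ι ℂ) : ℂ :=
  (xᵀ * y).trace

/-- The Choi matrix `C_φ = Σ_{i,j} e_{ij} ⊗ φ(e_{ij})`. -/
noncomputable def choi {m n : ℕ} (φ : MMap m n) :
    Matrix (Fin m × Fin n) (Fin m × Fin n) ℂ :=
  Matrix.of fun p q => φ (Matrix.single p.1 q.1 1) p.2 q.2

/-- The pairing on maps `⟨φ,ψ⟩ = ⟨C_φ, C_ψ⟩`. -/
noncomputable def mapPair {m n : ℕ} (φ ψ : MMap m n) : ℂ := mpair (choi φ) (choi ψ)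

/-- The adjoint `φ*` with respect to the pairing `⟨a,b⟩ = Tr(aᵀ b)`:
it satisfies `⟨φ(a),b⟩ = ⟨a,φ*(b)⟩`. -/
noncomputable def adjMap {m n : ℕ} (φ : MMap m n) : MMap n m where
  toFun y := Matrix.of fun i j => mpair (φ (Matrix.single i j 1)) y
  map_add' y z := by
    ext i j
    simp [mpair, Matrix.mul_add]
  map_smul' c y := by
    ext i j
    simp [mpair, Matrix.mul_smul]

/-- Hermitian-preserving maps: `φ(a*) = φ(a)*`. -/
def IsHermP {m n : ℕ} (φ : MMap m n) : Prop := ∀ x : Mat m, φ xᴴ = (φ x)ᴴ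

/-- The real vector space `H(M_A,M_B)` of Hermitian-preserving maps, as a set. -/
def HermSet (m n : ℕ) : Set (MMap m n) := {φ | IsHermP φ}

/-- Positive maps: mapping positive semidefinite matrices to positive semidefinite ones. -/
def IsPosMap {m n : ℕ} (φ : MMap m n) : Prop :=
  ∀ x : Mat m, x.PosSemidef → (φ x).PosSemidef

/-- Completely positive maps: those whose Choi matrix is positive semidefinite. -/
def IsCP {m n : ℕ} (φ : MMap m n) : Prop := (choi φ).PosSemidef

/-- The cone `CP` of completely positive maps. -/
def CPset (m n : ℕ) : Set (MMap m n) := {φ | IsCP φ}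

/-- `K₁ ∘ K₀ = {φ₁ ∘ φ₀ : φ₁ ∈ K₁, φ₀ ∈ K₀}`. -/
def compSet {m n p : ℕ} (K1 : Set (MMap n p)) (K0 : Set (MMap m n)) : Set (MMap m p) :=
  {χ | ∃ φ₁ ∈ K1, ∃ φ₀ ∈ K0, χ = φ₁ ∘ₗ φ₀}

/-- `K₂ ∘ K₁ ∘ K₀ = {φ₂ ∘ φ₁ ∘ φ₀ : φᵢ ∈ Kᵢ}`. -/
def comp3 {m n p q : ℕ} (K2 : Set (MMap p q)) (K1 : Set (MMap n p)) (K0 : Set (MMap m n)) :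
    Set (MMap m q) :=
  {χ | ∃ φ₂ ∈ K2, ∃ φ₁ ∈ K1, ∃ φ₀ ∈ K0, χ = φ₂ ∘ₗ φ₁ ∘ₗ φ₀}

/-- The dual cone `K° = {ψ ∈ H(M_A,M_B) : ⟨φ,ψ⟩ ≥ 0 for all φ ∈ K}`. -/
def dualCone {m n : ℕ} (K : Set (MMap m n)) : Set (MMap m n) :=
  {ψ | IsHermP ψ ∧ ∀ φ ∈ K, 0 ≤ mapPair φ ψ}

/-- `K* = {φ* : φ ∈ K}`. -/
noncomputable def starSet {m n : ℕ} (K : Set (MMap m n)) : Set (MMap n m) := adjMap '' K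

/-- `K^⊳ = (K ∘ CP_A)°`. -/
def rdualSet {m n : ℕ} (K : Set (MMap m n)) : Set (MMap m n) :=
  dualCone (compSet K (CPset m m))

/-- `K^⊲ = (CP_B ∘ K)°`. -/
def ldualSet {m n : ℕ} (K : Set (MMap m n)) : Set (MMap m n) :=
  dualCone (compSet (CPset n n) K)

/-- A convex cone of maps: closed under addition and nonnegative real scaling. -/
def IsConeSet {m n : ℕ} (K : Set (MMap m n)) : Prop :=
  (∀ φ ∈ K, ∀ ψ ∈ K, φ + ψ ∈ K) ∧ (∀ φ ∈ K, ∀ r : ℝ, 0 ≤ r → (r : ℂ) • φ ∈ K)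

/-- A closed convex cone of maps (closedness via the Choi isomorphism). -/
def IsClosedConeSet {m n : ℕ} (K : Set (MMap m n)) : Prop :=
  IsConeSet K ∧ IsClosed (choi '' K)

/-- Ampliation `1_Z ⊗ σ : M_Z ⊗ M_X → M_Z ⊗ M_Y`. -/
def idTensor {z x y : ℕ} (σ : MMap x y)
    (M : Matrix (Fin z × Fin x) (Fin z × Fin x) ℂ) :
    Matrix (Fin z × Fin y) (Fin z × Fin y) ℂ :=
  Matrix.of fun p q => σ (Matrix.of fun k l => M (p.1, k) (q.1, l)) p.2 q.2

/-- Ampliation `σ ⊗ 1_Z : M_X ⊗ M_Z → M_Y ⊗ M_Z`. -/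
def tensorId {x y z : ℕ} (σ : MMap x y)
    (M : Matrix (Fin x × Fin z) (Fin x × Fin z) ℂ) :
    Matrix (Fin y × Fin z) (Fin y × Fin z) ℂ :=
  Matrix.of fun p q => σ (Matrix.of fun i j => M (i, p.2) (j, q.2)) p.1 q.1

/-- `S_1`: the closed convex cone generated by `x ⊗ y` with `x, y` positive semidefinite. -/
def SepCone (m n : ℕ) : Set (Matrix (Fin m × Fin n) (Fin m × Fin n) ℂ) :=
  closure {X | ∃ (r : ℕ) (x : Fin r → Mat m) (y : Fin r → Mat n),
    (∀ i, (x i).PosSemidef ∧ (y i).PosSemidef) ∧ X = ∑ i, x i ⊗ₖ y i}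

/-- `SP_1`: Hermitian-preserving maps with separable Choi matrix. -/
def SP1set (m n : ℕ) : Set (MMap m n) := {φ | IsHermP φ ∧ choi φ ∈ SepCone m n}


/-- Vectors of Schmidt rank at most `k`. -/
def SchmidtRankLE (k : ℕ) {m n : ℕ} (ξ : Fin m × Fin n → ℂ) : Prop :=
  ∃ (u : Fin k → Fin m → ℂ) (v : Fin k → Fin n → ℂ),
    ξ = fun p => ∑ i, u i p.1 * v i p.2

/-- `k`-blockpositive matrices: `⟨Y, |ξ⟩⟨ξ|⟩ ≥ 0` for every `ξ` of Schmidt rank at most `k`. -/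
def BlockPos (k : ℕ) {m n : ℕ} (Y : Matrix (Fin m × Fin n) (Fin m × Fin n) ℂ) : Prop :=
  ∀ ξ : Fin m × Fin n → ℂ, SchmidtRankLE k ξ →
    0 ≤ mpair Y (Matrix.of fun p q => ξ p * star (ξ q))

/-- `S_k`: the closed convex cone generated by `|ξ⟩⟨ξ|` for `ξ` of Schmidt rank at most `k`. -/
def SchmidtCone (k m n : ℕ) : Set (Matrix (Fin m × Fin n) (Fin m × Fin n) ℂ) :=
  closure {X | ∃ (r : ℕ) (ξ : Fin r → Fin m × Fin n → ℂ),
    (∀ i, SchmidtRankLE k (ξ i)) ∧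
    X = ∑ i, Matrix.of fun p q => ξ i p * star (ξ i q)}

/-- `k`-positive maps: the ampliation `1_{M_k} ⊗ φ` is a positive map. -/
def IsKPos (k : ℕ) {m n : ℕ} (φ : MMap m n) : Prop :=
  ∀ X : Matrix (Fin k × Fin m) (Fin k × Fin m) ℂ, X.PosSemidef → (idTensor φ X).PosSemidef

/-- The transpose map as a linear map. -/
def tmap (m : ℕ) : MMap m m where
  toFun x := xᵀ
  map_add' x y := by simp [Matrix.transpose_add]
  map_smul' c x := by simp [Matrix.transpose_smul]

/-- Completely copositive maps: `CCP = {φ ∘ t : φ ∈ CP}`. -/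
def CCPset (m : ℕ) : Set (MMap m m) := {χ | ∃ φ, IsCP φ ∧ χ = φ ∘ₗ tmap m}

/-- PPT maps: `PPT = CP ∩ CCP`. -/
def PPTset (m : ℕ) : Set (MMap m m) := CPset m m ∩ CCPset m

/-- Decomposable maps: the convex hull of `CP` and `CCP`. -/
noncomputable def DECset (m : ℕ) : Set (MMap m m) := convexHull ℝ (CPset m m ∪ CCPset m)

/-- The cone `P_1` of positive maps. -/
def P1set (m n : ℕ) : Set (MMap m n) := {φ | IsPosMap φ}

/-- A right-mapping cone: a closed convex cone of positive (Hermitian-preserving) maps `L`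
with `L ∘ CP_A ⊆ L`. -/
def IsRMC {m n : ℕ} (L : Set (MMap m n)) : Prop :=
  L ⊆ HermSet m n ∧ (∀ φ ∈ L, IsPosMap φ) ∧ IsClosedConeSet L ∧
    compSet L (CPset m m) ⊆ L

/-- A left-mapping cone: a closed convex cone of positive (Hermitian-preserving) maps `L`
with `CP_B ∘ L ⊆ L`. -/
def IsLMC {m n : ℕ} (L : Set (MMap m n)) : Prop :=
  L ⊆ HermSet m n ∧ (∀ φ ∈ L, IsPosMap φ) ∧ IsClosedConeSet L ∧
    compSet (CPset n n) L ⊆ L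

section Stmt5Aux

noncomputable abbrev Ebm {m : ℕ} (i j : Fin m) : Mat m := Matrix.single i j 1

lemma mpair_eq {ι : Type*} [Fintype ι] (x y : Matrix ι ι ℂ) :
    mpair x y = ∑ p, ∑ q, x p q * y p q := by
  simp only [mpair, Matrix.trace, Matrix.diag, Matrix.mul_apply, Matrix.transpose_apply]
  rw [Finset.sum_comm]

lemma map_matrix_eq {m n : ℕ} (φ : MMap m n) (x : Mat m) :
    φ x = ∑ i, ∑ j, x i j • φ (Ebm i j) := by
  conv_lhs => rw [Matrix.matrix_eq_sum_single x]
  simp_rw [map_sum]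
  refine Finset.sum_congr rfl fun i _ => Finset.sum_congr rfl fun j _ => ?_
  rw [← _root_.map_smul, smul_single, smul_eq_mul, mul_one]

lemma map_apply_eq {m n : ℕ} (φ : MMap m n) (x : Mat m) (k l : Fin n) :
    φ x k l = ∑ i, ∑ j, x i j * φ (Ebm i j) k l := by
  rw [map_matrix_eq φ x]
  simp [Matrix.sum_apply]

lemma choi_apply {m n : ℕ} (φ : MMap m n) (i j : Fin m) (k l : Fin n) :
    choi φ (i, k) (j, l) = φ (Ebm i j) k l := rfl

lemma mapPair_eq {m n : ℕ} (φ ψ : MMap m n) :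
    mapPair φ ψ = ∑ i, ∑ j, mpair (φ (Ebm i j)) (ψ (Ebm i j)) := by
  simp_rw [mapPair, mpair_eq, Fintype.sum_prod_type]
  refine Finset.sum_congr rfl fun i _ => ?_
  exact Finset.sum_comm

end Stmt5Aux
lemma mpair_stdBasis {m : ℕ} (x : Mat m) (s t : Fin m) :
    mpair x (Matrix.single s t 1) = x s t := by
  rw [mpair_eq]
  simp [Matrix.single, mul_ite, ite_and, Finset.sum_ite_eq]

lemma sum_swap4 {M N : Type*} [Fintype M] [Fintype N] (f : M → M → N → N → ℂ) :
    ∑ k : M, ∑ l : M, ∑ s : N, ∑ t : N, f k l s t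
      = ∑ s : N, ∑ t : N, ∑ k : M, ∑ l : M, f k l s t := by
  have h : (∑ p : M × M, ∑ q : N × N, f p.1 p.2 q.1 q.2)
      = ∑ q : N × N, ∑ p : M × M, f p.1 p.2 q.1 q.2 := Finset.sum_comm
  simp_rw [Fintype.sum_prod_type] at h
  exact h

lemma sum_swap6 {M N P : Type*} [Fintype M] [Fintype N] [Fintype P]
    (f : M → M → N → N → P → P → ℂ) :
    ∑ i : M, ∑ j : M, ∑ k : N, ∑ l : N, ∑ s : P, ∑ t : P, f i j k l s t
      = ∑ s : P, ∑ t : P, ∑ k : N, ∑ l : N, ∑ i : M, ∑ j : M, f i j k l s t := by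
  have h : (∑ p : M × M, ∑ q : N × N, ∑ r : P × P, f p.1 p.2 q.1 q.2 r.1 r.2)
      = ∑ r : P × P, ∑ q : N × N, ∑ p : M × M, f p.1 p.2 q.1 q.2 r.1 r.2 := by
    calc (∑ p : M × M, ∑ q : N × N, ∑ r : P × P, f p.1 p.2 q.1 q.2 r.1 r.2)
        = ∑ q : N × N, ∑ p : M × M, ∑ r : P × P, f p.1 p.2 q.1 q.2 r.1 r.2 :=
          Finset.sum_comm
      _ = ∑ q : N × N, ∑ r : P × P, ∑ p : M × M, f p.1 p.2 q.1 q.2 r.1 r.2 :=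
          Finset.sum_congr rfl fun q _ => Finset.sum_comm
      _ = ∑ r : P × P, ∑ q : N × N, ∑ p : M × M, f p.1 p.2 q.1 q.2 r.1 r.2 :=
          Finset.sum_comm
  simp_rw [Fintype.sum_prod_type] at h
  exact h

noncomputable def ofChoi {m n : ℕ} (C : Matrix (Fin m × Fin n) (Fin m × Fin n) ℂ) :
    MMap m n where
  toFun x := Matrix.of fun k l => ∑ i, ∑ j, x i j * C (i, k) (j, l)
  map_add' x y := by
    ext k l
    simp [Matrix.add_apply, add_mul, Finset.sum_add_distrib]
  map_smul' c x := by
    ext k l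
    simp [Finset.mul_sum, mul_assoc]

lemma choi_ofChoi {m n : ℕ} (C : Matrix (Fin m × Fin n) (Fin m × Fin n) ℂ) :
    choi (ofChoi C) = C := by
  ext ⟨i, k⟩ ⟨j, l⟩
  show ∑ i', ∑ j', (Ebm i j) i' j' * C (i', k) (j', l) = C (i, k) (j, l)
  simp [Matrix.single, ite_and, Finset.sum_ite_eq]

lemma adjMap_apply {m n : ℕ} (ψ : MMap m n) (y : Mat n) (s t : Fin m) :
    adjMap ψ y s t = mpair (ψ (Ebm s t)) y := rfl
lemma trace_nonneg_of_psd {ι : Type*} [Fintype ι] [DecidableEq ι] {A : Matrix ι ι ℂ}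
    (hA : A.PosSemidef) : 0 ≤ A.trace := by
  rw [Matrix.trace]
  apply Finset.sum_nonneg
  intro p _
  simpa [dotProduct, Matrix.mulVec, Pi.single_apply] using hA.dotProduct_mulVec_nonneg (Pi.single p 1)

lemma mpair_nonneg {ι : Type*} [Fintype ι] [DecidableEq ι] {C M : Matrix ι ι ℂ}
    (hC : C.PosSemidef) (hM : M.PosSemidef) : 0 ≤ mpair C M := by
  have h1 := (hC.hadamard hM).dotProduct_mulVec_nonneg (fun _ => 1)
  rw [mpair_eq]
  simpa [dotProduct, Matrix.mulVec, Matrix.hadamard] using h1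

lemma posSemidef_of_pairing {ι : Type*} [Fintype ι] [DecidableEq ι] {M : Matrix ι ι ℂ}
    (hM : M.IsHermitian) (h : ∀ C : Matrix ι ι ℂ, C.PosSemidef → 0 ≤ mpair C M) :
    M.PosSemidef := by
  refine .of_dotProduct_mulVec_nonneg hM fun x => ?_
  set C : Matrix ι ι ℂ := Matrix.vecMulVec (star x) x with hCdef
  have hCe : ∀ p q, C p q = star (x p) * x q := by
    intro p q; simp [hCdef, Matrix.vecMulVec_apply]
  have hC : C.PosSemidef := by
    refine .of_dotProduct_mulVec_nonneg ?_ fun y => ?_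
    · ext p q
      simp [Matrix.conjTranspose_apply, hCe, mul_comm]
    · have hq : star y ⬝ᵥ C *ᵥ y = star (x ⬝ᵥ y) * (x ⬝ᵥ y) := by
        simp only [dotProduct, Matrix.mulVec, hCe, Pi.star_apply, star_sum, star_mul',
          Finset.mul_sum, Finset.sum_mul]
        rw [Finset.sum_comm]
        refine Finset.sum_congr rfl fun p _ => Finset.sum_congr rfl fun q _ => by ring
      rw [hq]
      exact star_mul_self_nonneg _
  have h2 := h C hC
  rw [mpair_eq] at h2
  have h3 : ∑ p, ∑ q, C p q * M p q = star x ⬝ᵥ M *ᵥ x := by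
    simp only [dotProduct, Matrix.mulVec, hCe, Pi.star_apply, Finset.mul_sum]
    refine Finset.sum_congr rfl fun p _ => Finset.sum_congr rfl fun q _ => by ring
  rwa [h3] at h2
lemma Ebm_conjTranspose {m : ℕ} (s t : Fin m) : (Ebm t s)ᴴ = Ebm s t := by
  ext p q
  simp [Matrix.single, Matrix.conjTranspose_apply, apply_ite (star : ℂ → ℂ), and_comm]

lemma herm_entry {m n : ℕ} {ψ : MMap m n} (h : IsHermP ψ) (s t : Fin m) (p q : Fin n) :
    star (ψ (Ebm t s) p q) = ψ (Ebm s t) q p := by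
  have h1 := h (Ebm t s)
  rw [Ebm_conjTranspose] at h1
  rw [h1]; exact (Matrix.conjTranspose_apply _ _ _).symm

lemma comp_herm {m n p : ℕ} {χ1 : MMap n p} {χ2 : MMap m n}
    (h1 : IsHermP χ1) (h2 : IsHermP χ2) : IsHermP (χ1 ∘ₗ χ2) := by
  intro x
  simp only [LinearMap.comp_apply]
  rw [h2 x, h1]

lemma adjMap_herm {m n : ℕ} {ψ : MMap m n} (h : IsHermP ψ) : IsHermP (adjMap ψ) := by
  intro y
  ext s t
  rw [Matrix.conjTranspose_apply, adjMap_apply, adjMap_apply, mpair_eq, mpair_eq, star_sum,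
    Finset.sum_comm]
  refine Finset.sum_congr rfl fun p _ => ?_
  rw [star_sum]
  refine Finset.sum_congr rfl fun q _ => ?_
  rw [star_mul', herm_entry h s t, Matrix.conjTranspose_apply]

lemma choi_herm {m n : ℕ} {χ : MMap m n} (h : IsHermP χ) : (choi χ).IsHermitian := by
  ext ⟨j, l⟩ ⟨i, k⟩
  rw [Matrix.conjTranspose_apply]
  show star (choi χ (i, k) (j, l)) = choi χ (j, l) (i, k)
  rw [choi_apply, choi_apply]
  exact herm_entry h j i k l
lemma key1 {a b : ℕ} (ψ φ : MMap a b) (α : MMap a a) :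
    mapPair (ψ ∘ₗ α) φ = mapPair α (adjMap ψ ∘ₗ φ) := by
  simp_rw [mapPair_eq, LinearMap.comp_apply, mpair_eq, adjMap_apply, mpair_eq]
  refine Finset.sum_congr rfl fun i _ => Finset.sum_congr rfl fun j _ => ?_
  have hL : (∑ k, ∑ l, ψ (α (Ebm i j)) k l * φ (Ebm i j) k l)
      = ∑ k, ∑ l, ∑ s, ∑ t,
          α (Ebm i j) s t * ψ (Ebm s t) k l * φ (Ebm i j) k l := by
    refine Finset.sum_congr rfl fun k _ => Finset.sum_congr rfl fun l _ => ?_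
    rw [map_apply_eq ψ, Finset.sum_mul]
    refine Finset.sum_congr rfl fun s _ => ?_
    rw [Finset.sum_mul]
  rw [hL, sum_swap4 (fun k l s t => α (Ebm i j) s t * ψ (Ebm s t) k l * φ (Ebm i j) k l)]
  simp_rw [Finset.mul_sum]
  refine Finset.sum_congr rfl fun s _ => Finset.sum_congr rfl fun t _ =>
    Finset.sum_congr rfl fun k _ => Finset.sum_congr rfl fun l _ => by ring

lemma key2 {a b : ℕ} (ψ φ : MMap a b) (β : MMap b b) :
    mapPair (β ∘ₗ ψ) φ = mapPair β (φ ∘ₗ adjMap ψ) := by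
  simp_rw [mapPair_eq, LinearMap.comp_apply, mpair_eq]
  have hR : ∀ s t : Fin b, (∑ k, ∑ l, β (Ebm s t) k l * φ (adjMap ψ (Ebm s t)) k l)
      = ∑ k, ∑ l, ∑ i, ∑ j,
          ψ (Ebm i j) s t * β (Ebm s t) k l * φ (Ebm i j) k l := by
    intro s t
    refine Finset.sum_congr rfl fun k _ => Finset.sum_congr rfl fun l _ => ?_
    rw [map_apply_eq φ, Finset.mul_sum]
    refine Finset.sum_congr rfl fun i _ => ?_
    rw [Finset.mul_sum]
    refine Finset.sum_congr rfl fun j _ => ?_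
    rw [adjMap_apply, mpair_stdBasis]
    ring
  have hL : (∑ i, ∑ j, ∑ k, ∑ l, β (ψ (Ebm i j)) k l * φ (Ebm i j) k l)
      = ∑ i, ∑ j, ∑ k, ∑ l, ∑ s, ∑ t,
          ψ (Ebm i j) s t * β (Ebm s t) k l * φ (Ebm i j) k l := by
    refine Finset.sum_congr rfl fun i _ => Finset.sum_congr rfl fun j _ =>
      Finset.sum_congr rfl fun k _ => Finset.sum_congr rfl fun l _ => ?_
    rw [map_apply_eq β, Finset.sum_mul]
    refine Finset.sum_congr rfl fun s _ => ?_
    rw [Finset.sum_mul]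
  rw [hL, sum_swap6 (fun i j k l s t =>
    ψ (Ebm i j) s t * β (Ebm s t) k l * φ (Ebm i j) k l)]
  exact Finset.sum_congr rfl fun s _ => Finset.sum_congr rfl fun t _ => (hR s t).symm

/-- `K^⊳` and `K^⊲` described via compositions. -/
theorem stmt5 {a b : ℕ} (K : Set (MMap a b)) (hH : K ⊆ HermSet a b) :
    rdualSet K = {φ : MMap a b | IsHermP φ ∧ ∀ ψ ∈ K, IsCP (adjMap ψ ∘ₗ φ)} ∧
    ldualSet K = {φ : MMap a b | IsHermP φ ∧ ∀ ψ ∈ K, IsCP (φ ∘ₗ adjMap ψ)} := by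
  constructor
  · ext φ
    simp only [rdualSet, dualCone, compSet, Set.mem_setOf_eq]
    constructor
    · rintro ⟨hφ, h⟩
      refine ⟨hφ, fun ψ hψ => ?_⟩
      have hherm : IsHermP (adjMap ψ ∘ₗ φ) := comp_herm (adjMap_herm (hH hψ)) hφ
      refine posSemidef_of_pairing (choi_herm hherm) fun C hC => ?_
      have hmem : ψ ∘ₗ ofChoi C ∈
          {χ : MMap a b | ∃ φ₁ ∈ K, ∃ φ₀ ∈ CPset a a, χ = φ₁ ∘ₗ φ₀} :=
        ⟨ψ, hψ, ofChoi C, by simpa [CPset, IsCP, choi_ofChoi] using hC, rfl⟩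
      have h2 := h _ hmem
      rwa [key1, mapPair, choi_ofChoi] at h2
    · rintro ⟨hφ, h⟩
      refine ⟨hφ, ?_⟩
      rintro χ ⟨ψ, hψ, α, hα, rfl⟩
      rw [key1, mapPair]
      exact mpair_nonneg hα (h ψ hψ)
  · ext φ
    simp only [ldualSet, dualCone, compSet, Set.mem_setOf_eq]
    constructor
    · rintro ⟨hφ, h⟩
      refine ⟨hφ, fun ψ hψ => ?_⟩
      have hherm : IsHermP (φ ∘ₗ adjMap ψ) := comp_herm hφ (adjMap_herm (hH hψ))
      refine posSemidef_of_pairing (choi_herm hherm) fun C hC => ?_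
      have hmem : ofChoi C ∘ₗ ψ ∈
          {χ : MMap a b | ∃ φ₁ ∈ CPset b b, ∃ φ₀ ∈ K, χ = φ₁ ∘ₗ φ₀} :=
        ⟨ofChoi C, by simpa [CPset, IsCP, choi_ofChoi] using hC, ψ, hψ, rfl⟩
      have h2 := h _ hmem
      rwa [key2, mapPair, choi_ofChoi] at h2
    · rintro ⟨hφ, h⟩
      refine ⟨hφ, ?_⟩
      rintro χ ⟨β, hβ, ψ, hψ, rfl⟩
      rw [key2, mapPair]
      exact mpair_nonneg hβ (h ψ hψ)
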